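/- The system (A,C,𝒜) is detectable if and only if the dual system (Aᵀ, Cᵀ, 𝒜ʳ) is stabilizable. -/

import Mathlib

open Matrix Filter

/-- An automaton `𝒜 = (M, s)` with `N` nodes: transition matrix `M ∈ {0,1}^{N×N}`
and vector of node labels `s ∈ {0,1}^N`. -/
structure Automaton (N : ℕ) where
  M : Matrix (Fin N) (Fin N) Bool
  s : Fin N → Bool

/-- `σ ∈ ℒ(𝒜)`: the data loss signal `σ` is admissible with respect to `𝒜`. -/
def Automaton.Admissible {N : ℕ} (𝒜 : Automaton N) (σ : ℕ → Bool) : Prop :=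
  ∃ v : ℕ → Fin N, ∀ t : ℕ, 𝒜.M (v t) (v (t + 1)) = true ∧ σ t = 𝒜.s (v t)

/-- A finite word of length `r` generated by `𝒜` (only the first `r` letters of `w` matter). -/
def Automaton.AdmissibleWord {N : ℕ} (𝒜 : Automaton N) (r : ℕ) (w : ℕ → Bool) : Prop :=
  ∃ v : ℕ → Fin N, (∀ t : ℕ, t + 1 < r → 𝒜.M (v t) (v (t + 1)) = true) ∧
    ∀ t : ℕ, t < r → w t = 𝒜.s (v t)

/-- The reverse automaton `𝒜ʳ = (Mᵀ, s)`. -/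
def Automaton.rev {N : ℕ} (𝒜 : Automaton N) : Automaton N :=
  ⟨𝒜.M.transpose, 𝒜.s⟩

/-- Observability of the system `(A, C, 𝒜)`. -/
def Observable {N n p : ℕ} (A : Matrix (Fin n) (Fin n) ℝ) (C : Matrix (Fin p) (Fin n) ℝ)
    (𝒜 : Automaton N) : Prop :=
  ∀ σ : ℕ → Bool, 𝒜.Admissible σ → ∀ x₀ : Fin n → ℝ,
    (∀ t : ℕ, σ t = true → (C * A ^ t).mulVec x₀ = 0) → x₀ = 0

/-- Practical observability of the system `(A, C, 𝒜)`. -/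
def PracticallyObservable {N n p : ℕ} (A : Matrix (Fin n) (Fin n) ℝ)
    (C : Matrix (Fin p) (Fin n) ℝ) (𝒜 : Automaton N) : Prop :=
  ∃ T : ℕ, ∀ σ : ℕ → Bool, 𝒜.Admissible σ → ∀ x₀ : Fin n → ℝ,
    (∀ t : ℕ, t ≤ T → σ t = true → (C * A ^ t).mulVec x₀ = 0) → x₀ = 0

/-- Constructibility of the system `(A, C, 𝒜)`. -/
def Constructible {N n p : ℕ} (A : Matrix (Fin n) (Fin n) ℝ) (C : Matrix (Fin p) (Fin n) ℝ)
    (𝒜 : Automaton N) : Prop :=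
  ∀ σ : ℕ → Bool, 𝒜.Admissible σ → ∃ T : ℕ, ∀ x₀ : Fin n → ℝ,
    (∀ t : ℕ, t ≤ T → σ t = true → (C * A ^ t).mulVec x₀ = 0) → (A ^ T).mulVec x₀ = 0

/-- Practical constructibility of the system `(A, C, 𝒜)`. -/
def PracticallyConstructible {N n p : ℕ} (A : Matrix (Fin n) (Fin n) ℝ)
    (C : Matrix (Fin p) (Fin n) ℝ) (𝒜 : Automaton N) : Prop :=
  ∃ T : ℕ, ∀ σ : ℕ → Bool, 𝒜.Admissible σ → ∀ x₀ : Fin n → ℝ,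
    (∀ t : ℕ, t ≤ T → σ t = true → (C * A ^ t).mulVec x₀ = 0) → (A ^ T).mulVec x₀ = 0

/-- Detectability of the system `(A, C, 𝒜)`. -/
def Detectable {N n p : ℕ} (A : Matrix (Fin n) (Fin n) ℝ) (C : Matrix (Fin p) (Fin n) ℝ)
    (𝒜 : Automaton N) : Prop :=
  ∀ σ : ℕ → Bool, 𝒜.Admissible σ → ∀ x₀ : Fin n → ℝ,
    (∀ t : ℕ, σ t = true → (C * A ^ t).mulVec x₀ = 0) →
      Tendsto (fun t : ℕ => (A ^ t).mulVec x₀) atTop (nhds 0)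

/-- The observability matrix `O_σ(t) = [σ(0)C; σ(1)CA; ...; σ(t−1)CA^{t−1}]`
(blocks stacked vertically, block `i` is row-block `i`). -/
def obsMat {n p : ℕ} (A : Matrix (Fin n) (Fin n) ℝ) (C : Matrix (Fin p) (Fin n) ℝ)
    (σ : ℕ → Bool) (t : ℕ) : Matrix (Fin t × Fin p) (Fin n) ℝ :=
  fun ij k => if σ (ij.1 : ℕ) then (C * A ^ (ij.1 : ℕ)) ij.2 k else 0

/-- State trajectory of the system `x(t+1) = A x(t) + σ(t) B u(t)`. -/
def traj {n m : ℕ} (A : Matrix (Fin n) (Fin n) ℝ) (B : Matrix (Fin n) (Fin m) ℝ)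
    (σ : ℕ → Bool) (u : ℕ → Fin m → ℝ) (x₀ : Fin n → ℝ) : ℕ → Fin n → ℝ
  | 0 => x₀
  | t + 1 => A.mulVec (traj A B σ u x₀ t) + if σ t then B.mulVec (u t) else 0

/-- Controllability of the system `(A, B, 𝒜)`. -/
def Controllable {N n m : ℕ} (A : Matrix (Fin n) (Fin n) ℝ) (B : Matrix (Fin n) (Fin m) ℝ)
    (𝒜 : Automaton N) : Prop :=
  ∀ σ : ℕ → Bool, 𝒜.Admissible σ → ∀ x₀ xf : Fin n → ℝ,
    ∃ u : ℕ → Fin m → ℝ, ∃ T : ℕ, traj A B σ u x₀ T = xf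

/-- Reachability of the system `(A, B, 𝒜)`. -/
def Reachable {N n m : ℕ} (A : Matrix (Fin n) (Fin n) ℝ) (B : Matrix (Fin n) (Fin m) ℝ)
    (𝒜 : Automaton N) : Prop :=
  ∀ σ : ℕ → Bool, 𝒜.Admissible σ → ∀ xf : Fin n → ℝ,
    ∃ u : ℕ → Fin m → ℝ, ∃ T : ℕ, traj A B σ u 0 T = xf

/-- 0-controllability of the system `(A, B, 𝒜)`. -/
def ZeroControllable {N n m : ℕ} (A : Matrix (Fin n) (Fin n) ℝ) (B : Matrix (Fin n) (Fin m) ℝ)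
    (𝒜 : Automaton N) : Prop :=
  ∀ σ : ℕ → Bool, 𝒜.Admissible σ → ∀ x₀ : Fin n → ℝ,
    ∃ u : ℕ → Fin m → ℝ, ∃ T : ℕ, traj A B σ u x₀ T = 0

/-- Stabilizability of the system `(A, B, 𝒜)`. -/
def Stabilizable {N n m : ℕ} (A : Matrix (Fin n) (Fin n) ℝ) (B : Matrix (Fin n) (Fin m) ℝ)
    (𝒜 : Automaton N) : Prop :=
  ∀ σ : ℕ → Bool, 𝒜.Admissible σ → ∀ x₀ : Fin n → ℝ,
    ∃ u : ℕ → Fin m → ℝ, Tendsto (fun t : ℕ => traj A B σ u x₀ t) atTop (nhds 0)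

/-- Practical controllability of the system `(A, B, 𝒜)`. -/
def PracticallyControllable {N n m : ℕ} (A : Matrix (Fin n) (Fin n) ℝ)
    (B : Matrix (Fin n) (Fin m) ℝ) (𝒜 : Automaton N) : Prop :=
  ∃ T : ℕ, ∀ σ : ℕ → Bool, 𝒜.Admissible σ → ∀ x₀ xf : Fin n → ℝ,
    ∃ u : ℕ → Fin m → ℝ, ∃ t : ℕ, t ≤ T ∧ traj A B σ u x₀ t = xf

/-- Practical reachability of the system `(A, B, 𝒜)`. -/
def PracticallyReachable {N n m : ℕ} (A : Matrix (Fin n) (Fin n) ℝ)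
    (B : Matrix (Fin n) (Fin m) ℝ) (𝒜 : Automaton N) : Prop :=
  ∃ T : ℕ, ∀ σ : ℕ → Bool, 𝒜.Admissible σ → ∀ xf : Fin n → ℝ,
    ∃ u : ℕ → Fin m → ℝ, ∃ t : ℕ, t ≤ T ∧ traj A B σ u 0 t = xf

/-- Practical 0-controllability of the system `(A, B, 𝒜)`. -/
def PracticallyZeroControllable {N n m : ℕ} (A : Matrix (Fin n) (Fin n) ℝ)
    (B : Matrix (Fin n) (Fin m) ℝ) (𝒜 : Automaton N) : Prop :=
  ∃ T : ℕ, ∀ σ : ℕ → Bool, 𝒜.Admissible σ → ∀ x₀ : Fin n → ℝ,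
    ∃ u : ℕ → Fin m → ℝ, ∃ t : ℕ, t ≤ T ∧ traj A B σ u x₀ t = 0

/-- The reachability matrix `C_σ(t) = [σ(t−1)B, σ(t−2)AB, ..., σ(0)A^{t−1}B]`
(block-column `i` is `σ(t−1−i) Aⁱ B`). -/
def reachMat {n m : ℕ} (A : Matrix (Fin n) (Fin n) ℝ) (B : Matrix (Fin n) (Fin m) ℝ)
    (σ : ℕ → Bool) (t : ℕ) : Matrix (Fin n) (Fin t × Fin m) ℝ :=
  fun k ij => if σ (t - 1 - (ij.1 : ℕ)) then (A ^ (ij.1 : ℕ) * B) k ij.2 else 0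

/-- State trajectory of the system with varying delays
`x(t+1) = A x(t) + Σ_{t' ≤ t, t' + d(t') = t} B u(t')`. -/
def delayTraj {n m : ℕ} (A : Matrix (Fin n) (Fin n) ℝ) (B : Matrix (Fin n) (Fin m) ℝ)
    (d : ℕ → ℕ) (u : ℕ → Fin m → ℝ) (x₀ : Fin n → ℝ) : ℕ → Fin n → ℝ
  | 0 => x₀
  | t + 1 => A.mulVec (delayTraj A B d u x₀ t) +
      ∑ t' ∈ Finset.range (t + 1), if t' + d t' = t then B.mulVec (u t') else 0

/-- Controllability of the system with varying delays `(A, B, 𝒟)`. -/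
def DelayControllable {n m : ℕ} (A : Matrix (Fin n) (Fin n) ℝ) (B : Matrix (Fin n) (Fin m) ℝ)
    (𝒟 : Finset ℕ) : Prop :=
  ∀ d : ℕ → ℕ, (∀ t : ℕ, d t ∈ 𝒟) → ∀ x₀ xf : Fin n → ℝ,
    ∃ u : ℕ → Fin m → ℝ, ∃ T : ℕ, delayTraj A B d u x₀ T = xf

/-- The controllability matrix `C̄_d(t)` of a system with varying delays: its `i`-th
block column (here indexed by `j = i - 1 : Fin t`) is `A^{t−i−d(i−1)} B` when
`i + d(i−1) ≤ t`, and the zero block otherwise. -/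
def delayCtrbMat {n m : ℕ} (A : Matrix (Fin n) (Fin n) ℝ) (B : Matrix (Fin n) (Fin m) ℝ)
    (d : ℕ → ℕ) (t : ℕ) : Matrix (Fin n) (Fin t × Fin m) ℝ :=
  fun k jl => if (jl.1 : ℕ) + 1 + d (jl.1 : ℕ) ≤ t
    then (A ^ (t - ((jl.1 : ℕ) + 1) - d (jl.1 : ℕ)) * B) k jl.2 else 0

-- The actuation signal `τ_d` of a delay signal `d`: `τ_d(t) = 1` iff there is
-- `t'` with `t' + d(t') = t`.
open Classical in
noncomputable def actuation (d : ℕ → ℕ) (t : ℕ) : Bool :=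
  if ∃ t' : ℕ, t' + d t' = t then true else false



section Aux


variable {n p : ℕ}

/-- The stable subspace of a matrix: initial states whose free trajectory tends to `0`. -/
def stab (B : Matrix (Fin n) (Fin n) ℝ) : Submodule ℝ (Fin n → ℝ) where
  carrier := {x | Tendsto (fun t : ℕ => (B ^ t).mulVec x) atTop (nhds 0)}
  add_mem' := by
    intro a b ha hb
    have := ha.add hb
    simpa [Matrix.mulVec_add] using this
  zero_mem' := by simp [Matrix.mulVec_zero, tendsto_const_nhds]
  smul_mem' := by
    intro c a ha
    have := ha.const_smul c
    simpa [Matrix.mulVec_smul] using this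

lemma mem_stab {B : Matrix (Fin n) (Fin n) ℝ} {x : Fin n → ℝ} :
    x ∈ stab B ↔ Tendsto (fun t : ℕ => (B ^ t).mulVec x) atTop (nhds 0) := Iff.rfl

lemma stab_mulVec_mem {B : Matrix (Fin n) (Fin n) ℝ} {x : Fin n → ℝ} (hx : x ∈ stab B) :
    B.mulVec x ∈ stab B := by
  rw [mem_stab] at hx ⊢
  have h1 : Tendsto (fun t : ℕ => (B ^ (t + 1)).mulVec x) atTop (nhds 0) :=
    hx.comp (tendsto_add_atTop_nat 1)
  convert h1 using 2 with t
  rw [pow_succ, ← Matrix.mulVec_mulVec]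


/-- Discrete "ISS" lemma: `y (t+1) = μ • y t + e t` with `‖μ‖ < 1` and `e → 0` forces `y → 0`. -/
lemma geom_recur {E : Type*} [NormedAddCommGroup E] [NormedSpace ℂ E] {μ : ℂ} (hμ : ‖μ‖ < 1)
    {y e : ℕ → E} (hrec : ∀ t, y (t + 1) = μ • y t + e t) (he : Tendsto e atTop (nhds 0)) :
    Tendsto y atTop (nhds 0) := by
  set r : ℝ := ‖μ‖ with hr
  have hr0 : 0 ≤ r := norm_nonneg μ
  rw [Metric.tendsto_atTop]
  intro ε hε
  have hε4 : 0 < ε * (1 - r) / 4 := by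
    apply div_pos (mul_pos hε (by linarith)) (by norm_num)
  obtain ⟨T₀, hT₀⟩ := (Metric.tendsto_atTop.mp he) (ε * (1 - r) / 4) hε4
  have hbound : ∀ s : ℕ, ‖y (T₀ + s)‖ ≤ r ^ s * ‖y T₀‖ + ε / 2 := by
    intro s
    induction s with
    | zero => simp; positivity
    | succ s ih =>
      have h1 : y (T₀ + (s + 1)) = μ • y (T₀ + s) + e (T₀ + s) := by
        rw [← hrec (T₀ + s)]; ring_nf
      have h2 : ‖y (T₀ + (s + 1))‖ ≤ r * ‖y (T₀ + s)‖ + ε * (1 - r) / 4 := by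
        rw [h1]
        refine le_trans (norm_add_le _ _) ?_
        gcongr
        · rw [norm_smul]
        · have := hT₀ (T₀ + s) (Nat.le_add_right _ _)
          rw [dist_eq_norm, sub_zero] at this
          exact this.le
      calc ‖y (T₀ + (s + 1))‖ ≤ r * (r ^ s * ‖y T₀‖ + ε / 2) + ε * (1 - r) / 4 := by
            refine le_trans h2 ?_; gcongr
        _ ≤ r ^ (s + 1) * ‖y T₀‖ + ε / 2 := by
            have hr1 : r < 1 := hμ
            rw [pow_succ]
            nlinarith [mul_nonneg hε.le (sub_nonneg.mpr hr1.le)]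
  have hpow : Tendsto (fun s : ℕ => r ^ s * ‖y T₀‖) atTop (nhds 0) := by
    simpa using (tendsto_pow_atTop_nhds_zero_of_lt_one hr0 hμ).mul_const ‖y T₀‖
  obtain ⟨S, hS⟩ := (Metric.tendsto_atTop.mp hpow) (ε / 4) (by positivity)
  refine ⟨T₀ + S, fun t ht => ?_⟩
  have hts : t = T₀ + (t - T₀) := by omega
  have hs : S ≤ t - T₀ := by omega
  rw [dist_eq_norm, sub_zero, hts]
  have h1 := hbound (t - T₀)
  have h2 := hS (t - T₀) hs
  rw [dist_eq_norm, sub_zero] at h2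
  have h3 : r ^ (t - T₀) * ‖y T₀‖ < ε / 4 := lt_of_abs_lt h2
  linarith


noncomputable def cmat (B : Matrix (Fin n) (Fin n) ℝ) : Matrix (Fin n) (Fin n) ℂ :=
  B.map Complex.ofRealHom

noncomputable def coeV (x : Fin n → ℝ) : Fin n → ℂ := fun i => (x i : ℂ)

lemma cmat_pow (B : Matrix (Fin n) (Fin n) ℝ) (t : ℕ) : cmat (B ^ t) = (cmat B) ^ t := by
  induction t with
  | zero => simp [cmat, pow_zero]
  | succ t ih =>
    rw [pow_succ, pow_succ, ← ih, cmat, cmat, cmat, Matrix.map_mul]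

lemma cmat_transpose (B : Matrix (Fin n) (Fin n) ℝ) : cmat Bᵀ = (cmat B)ᵀ := by
  simp [cmat, Matrix.transpose_map]

lemma dot_mulVec_transpose (M : Matrix (Fin n) (Fin n) ℂ) (v z : Fin n → ℂ) :
    v ⬝ᵥ (Mᵀ.mulVec z) = (M.mulVec v) ⬝ᵥ z := by
  rw [Matrix.mulVec_transpose, dotProduct_comm (M.mulVec v) z,
    Matrix.dotProduct_mulVec, dotProduct_comm]

lemma cmat_mulVec_re (B : Matrix (Fin n) (Fin n) ℝ) (w : Fin n → ℂ) (j : Fin n) :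
    ((cmat B).mulVec w j).re = B.mulVec (fun i => (w i).re) j := by
  simp only [Matrix.mulVec, dotProduct, cmat, Matrix.map_apply, Complex.re_sum]
  congr 1; funext i
  simp [Complex.mul_re]

lemma cmat_mulVec_im (B : Matrix (Fin n) (Fin n) ℝ) (w : Fin n → ℂ) (j : Fin n) :
    ((cmat B).mulVec w j).im = B.mulVec (fun i => (w i).im) j := by
  simp only [Matrix.mulVec, dotProduct, cmat, Matrix.map_apply, Complex.im_sum]
  congr 1; funext i
  simp [Complex.mul_im]

lemma dot_coeV_re (x : Fin n → ℝ) (w : Fin n → ℂ) :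
    (coeV x ⬝ᵥ w).re = x ⬝ᵥ (fun i => (w i).re) := by
  simp only [dotProduct, coeV, Complex.re_sum]
  congr 1; funext i; simp [Complex.mul_re]

lemma dot_coeV_im (x : Fin n → ℝ) (w : Fin n → ℂ) :
    (coeV x ⬝ᵥ w).im = x ⬝ᵥ (fun i => (w i).im) := by
  simp only [dotProduct, coeV, Complex.im_sum]
  congr 1; funext i; simp [Complex.mul_im]

section D0
variable {n : ℕ}

lemma pow_mulVecLin (Mc : Matrix (Fin n) (Fin n) ℂ) (t : ℕ) (z : Fin n → ℂ) :
    ((Mc.mulVecLin : Module.End ℂ (Fin n → ℂ)) ^ t) z = (Mc ^ t).mulVec z := by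
  induction t generalizing z with
  | zero => simp
  | succ t ih =>
    rw [pow_succ', Module.End.mul_apply, ih z, Matrix.mulVecLin_apply,
      Matrix.mulVec_mulVec, ← pow_succ']

lemma stab_dual_orth_inter (A : Matrix (Fin n) (Fin n) ℝ) (x : Fin n → ℝ)
    (hx : x ∈ stab A) (horth : ∀ z ∈ stab Aᵀ, x ⬝ᵥ z = 0) : x = 0 := by
  classical
  set g : Module.End ℂ (Fin n → ℂ) := ((cmat A)ᵀ).mulVecLin with hg
  -- powers of g as matrix powers
  have hgpow : ∀ (t : ℕ) (z : Fin n → ℂ), (g ^ t) z = (cmat ((A ^ t)ᵀ)).mulVec z := by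
    intro t z
    rw [hg, pow_mulVecLin]
    congr 1
    rw [cmat_transpose, cmat_pow, Matrix.transpose_pow]
  -- the key decay of pairings
  have hd : ∀ z : Fin n → ℂ, Tendsto (fun t : ℕ => coeV x ⬝ᵥ (g ^ t) z) atTop (nhds 0) := by
    intro z
    have hxt : Tendsto (fun t : ℕ => coeV ((A ^ t).mulVec x)) atTop (nhds 0) := by
      rw [tendsto_pi_nhds]
      intro j
      have := (tendsto_pi_nhds.mp hx) j
      have h2 := (Complex.continuous_ofReal.tendsto 0).comp this
      simpa [coeV, Function.comp_def] using h2
    have heq : ∀ t : ℕ, coeV x ⬝ᵥ (g ^ t) z = coeV ((A ^ t).mulVec x) ⬝ᵥ z := by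
      intro t
      rw [hgpow t z, cmat_transpose, dot_mulVec_transpose]
      congr 1
      funext j
      simp only [cmat, coeV, Matrix.mulVec, dotProduct, Matrix.map_apply]
      push_cast
      rfl
    have hsum : Tendsto (fun t : ℕ => ∑ j, coeV ((A ^ t).mulVec x) j * z j) atTop (nhds 0) := by
      have h0 : (0 : ℂ) = ∑ j : Fin n, 0 * z j := by simp
      rw [h0]
      refine tendsto_finset_sum _ (fun j _ => ?_)
      exact ((tendsto_pi_nhds.mp hxt) j).mul tendsto_const_nhds
    simp only [heq]
    exact hsum
  -- main claim: the complexified x pairs to zero with everything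
  have main : ∀ w : Fin n → ℂ, coeV x ⬝ᵥ w = 0 := by
    have htop := Module.End.iSup_maxGenEigenspace_eq_top g
    intro w
    have hw : w ∈ (⊤ : Submodule ℂ (Fin n → ℂ)) := Submodule.mem_top
    rw [← htop] at hw
    refine Submodule.iSup_induction _ (motive := fun w => coeV x ⬝ᵥ w = 0) hw ?_ (by simp) ?_
    · -- per generalized eigenspace
      intro μ w hw
      obtain ⟨k, hk⟩ := (Module.End.mem_maxGenEigenspace g μ w).mp hw
      rcases lt_or_ge ‖μ‖ 1 with hlt | hge
      · -- stable eigenvalue: w's real and imaginary parts are in `stab Aᵀ`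
        have hdecay : ∀ (k : ℕ) (w : Fin n → ℂ), ((g - μ • 1) ^ k) w = 0 →
            Tendsto (fun t : ℕ => (g ^ t) w) atTop (nhds 0) := by
          intro k
          induction k with
          | zero => intro w hw0; simp at hw0; simp [hw0, map_zero]
          | succ k ih =>
            intro w hw0
            set w₁ := (g - μ • 1) w with hw₁
            have hk1 : ((g - μ • 1) ^ k) w₁ = 0 := by
              rw [hw₁, ← Module.End.mul_apply, ← pow_succ, hw0]
            have he := ih w₁ hk1
            have hrec : ∀ t : ℕ, (g ^ (t + 1)) w = μ • (g ^ t) w + (g ^ t) w₁ := by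
              intro t
              have : g w = μ • w + w₁ := by
                rw [hw₁]; simp [LinearMap.sub_apply, LinearMap.smul_apply]
              rw [pow_succ, Module.End.mul_apply, this, map_add, LinearMap.map_smul]
            exact geom_recur hlt hrec he
        have hw0 := hdecay k w hk
        -- real and imaginary parts
        set wre := fun i => (w i).re with hwre
        set wim := fun i => (w i).im with hwim
        have hre : wre ∈ stab Aᵀ := by
          rw [mem_stab, tendsto_pi_nhds]
          intro j
          have h1 : Tendsto (fun t : ℕ => ((g ^ t) w j).re) atTop (nhds 0) := by
            have := (Complex.continuous_re.tendsto 0).comp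
              ((tendsto_pi_nhds.mp hw0) j)
            simpa [Function.comp_def] using this
          have h2 : ∀ t : ℕ, ((g ^ t) w j).re = ((Aᵀ) ^ t).mulVec wre j := by
            intro t
            rw [hgpow t w, ← Matrix.transpose_pow, cmat_mulVec_re]
          simpa [h2] using h1
        have him : wim ∈ stab Aᵀ := by
          rw [mem_stab, tendsto_pi_nhds]
          intro j
          have h1 : Tendsto (fun t : ℕ => ((g ^ t) w j).im) atTop (nhds 0) := by
            have := (Complex.continuous_im.tendsto 0).comp
              ((tendsto_pi_nhds.mp hw0) j)
            simpa [Function.comp_def] using this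
          have h2 : ∀ t : ℕ, ((g ^ t) w j).im = ((Aᵀ) ^ t).mulVec wim j := by
            intro t
            rw [hgpow t w, ← Matrix.transpose_pow, cmat_mulVec_im]
          simpa [h2] using h1
        have e1 : x ⬝ᵥ wre = 0 := horth wre hre
        have e2 : x ⬝ᵥ wim = 0 := horth wim him
        apply Complex.ext
        · rw [dot_coeV_re, ← hwre, e1]; rfl
        · rw [dot_coeV_im, ← hwim, e2]; rfl
      · -- unstable eigenvalue
        have claim : ∀ (k : ℕ) (w : Fin n → ℂ), ((g - μ • 1) ^ k) w = 0 →
            ∀ t : ℕ, coeV x ⬝ᵥ (g ^ t) w = 0 := by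
          intro k
          induction k with
          | zero => intro w hw0 t; simp at hw0; simp [hw0, map_zero]
          | succ k ih =>
            intro w hw0
            set w₁ := (g - μ • 1) w with hw₁
            have hk1 : ((g - μ • 1) ^ k) w₁ = 0 := by
              rw [hw₁, ← Module.End.mul_apply, ← pow_succ, hw0]
            have h1 := ih w₁ hk1
            have hgeom : ∀ t : ℕ, coeV x ⬝ᵥ (g ^ t) w = μ ^ t * (coeV x ⬝ᵥ w) := by
              intro t
              induction t with
              | zero => simp
              | succ t iht =>
                have hgw : g w = μ • w + w₁ := by
                  rw [hw₁]; simp [LinearMap.sub_apply, LinearMap.smul_apply]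
                have : (g ^ (t + 1)) w = μ • (g ^ t) w + (g ^ t) w₁ := by
                  rw [pow_succ, Module.End.mul_apply, hgw, map_add, LinearMap.map_smul]
                rw [this, dotProduct_add, dotProduct_smul, iht, h1 t,
                  add_zero, smul_eq_mul, pow_succ]
                ring
            have hzero : coeV x ⬝ᵥ w = 0 := by
              by_contra hne
              have htd := hd w
              simp only [hgeom] at htd
              obtain ⟨T, hT⟩ := (Metric.tendsto_atTop.mp htd) ‖coeV x ⬝ᵥ w‖
                (norm_pos_iff.mpr hne)
              have h3 := hT T le_rfl
              rw [dist_eq_norm, sub_zero, norm_mul, norm_pow] at h3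
              have h4 : (1 : ℝ) ≤ ‖μ‖ ^ T := one_le_pow₀ hge
              nlinarith [norm_pos_iff.mpr hne, norm_nonneg (coeV x ⬝ᵥ w)]
            intro t
            rw [hgeom t, hzero, mul_zero]
        have := claim k w hk 0
        simpa using this
    · -- additivity
      intro y z hy hz
      rw [dotProduct_add, hy, hz, add_zero]
  funext i
  have := main (Pi.single i 1)
  rw [dotProduct_single] at this
  simp only [mul_one, coeV] at this
  exact_mod_cast this

end D0



/-- König's lemma for prefix-closed predicates on runs over a finite node set. -/
lemma koenig {N : ℕ} (Bad : ℕ → (ℕ → Fin N) → Prop)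
    (hmono : ∀ T' T v, T' ≤ T → Bad T v → Bad T' v)
    (hext : ∀ T v w, (∀ s, s < T → v s = w s) → Bad T v → Bad T w)
    (hlong : ∀ L, ∃ v, Bad L v) :
    ∃ v : ℕ → Fin N, ∀ T, Bad T v := by
  classical
  set Ext : ℕ → (ℕ → Fin N) → Prop :=
    fun T v => ∀ L, ∃ w, Bad L w ∧ ∀ s, s < T → w s = v s with hExtDef
  obtain ⟨v0, -⟩ := hlong 0
  have hExt0 : Ext 0 v0 := by
    intro L
    obtain ⟨w, hw⟩ := hlong L
    exact ⟨w, hw, fun s hs => absurd hs (Nat.not_lt_zero s)⟩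
  have hstep : ∀ T (v : ℕ → Fin N), Ext T v →
      ∃ v' : ℕ → Fin N, Ext (T + 1) v' ∧ ∀ s, s < T → v' s = v s := by
    intro T v hv
    by_contra hno
    push_neg at hno
    have hq : ∀ q : Fin N, ¬ Ext (T + 1) (Function.update v T q) := by
      intro q hq'
      obtain ⟨s, hs, hneq⟩ := hno (Function.update v T q) hq'
      exact hneq (Function.update_of_ne (by omega) _ _)
    have hq' : ∀ q : Fin N, ∃ L, ∀ w, Bad L w → ∃ s, s < T + 1 ∧
        w s ≠ Function.update v T q s := by
      intro q
      have := hq q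
      simp only [hExtDef] at this
      push_neg at this
      obtain ⟨L, hL⟩ := this
      exact ⟨L, fun w hw => by
        obtain ⟨s, hs1, hs2⟩ := hL w hw
        exact ⟨s, hs1, hs2⟩⟩
    choose Lfun hLfun using hq'
    set Lmax := (Finset.univ : Finset (Fin N)).sup Lfun with hLmax
    obtain ⟨w, hwBad, hwAg⟩ := hv (Lmax + T + 1)
    set q := w T with hqdef
    have hLle : Lfun q ≤ Lmax + T + 1 := by
      have : Lfun q ≤ Lmax := Finset.le_sup (Finset.mem_univ q)
      omega
    obtain ⟨s, hs1, hs2⟩ := hLfun q w (hmono _ _ _ hLle hwBad)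
    apply hs2
    rcases Nat.lt_or_ge s T with h | h
    · rw [Function.update_of_ne (by omega), hwAg s (by omega)]
    · have hsT : s = T := by omega
      rw [hsT, Function.update_self]
  -- build the chain
  let F : (T : ℕ) → {v : ℕ → Fin N // Ext T v} := fun T =>
    Nat.rec ⟨v0, hExt0⟩
      (fun T' p => ⟨Classical.choose (hstep T' p.1 p.2),
        (Classical.choose_spec (hstep T' p.1 p.2)).1⟩) T
  have hFs : ∀ T, (F (T + 1)).1 = Classical.choose (hstep T (F T).1 (F T).2) := fun T => rfl
  have hagree : ∀ T s, s < T → (F (T + 1)).1 s = (F T).1 s := by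
    intro T s hs
    rw [hFs]
    exact (Classical.choose_spec (hstep T (F T).1 (F T).2)).2 s hs
  have hstab : ∀ (s T T' : ℕ), s < T → T ≤ T' → (F T').1 s = (F T).1 s := by
    intro s T T' hs hTT'
    induction T' with
    | zero => omega
    | succ T' ih =>
      rcases Nat.lt_or_ge T (T' + 1) with h | h
      · have h1 : T ≤ T' := by omega
        rw [hagree T' s (by omega)]
        exact ih h1
      · have : T = T' + 1 := by omega
        rw [this]
  set vinf : ℕ → Fin N := fun s => (F (s + 1)).1 s with hvinf
  have hv : ∀ T s, s < T → (F T).1 s = vinf s := by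
    intro T s hs
    show (F T).1 s = (F (s + 1)).1 s
    exact hstab s (s + 1) T (by omega) (by omega)
  refine ⟨vinf, fun T => ?_⟩
  obtain ⟨w, hwBad, hwAg⟩ := (F T).2 T
  refine hext T w vinf (fun s hs => ?_) hwBad
  rw [hwAg s hs, hv T s hs]

end Aux


lemma dotProduct_transpose_mulVec {a b : Type*} [Fintype a] [Fintype b] {R : Type*}
    [CommSemiring R] (M : Matrix a b R) (v : b → R) (z : a → R) :
    v ⬝ᵥ (Mᵀ.mulVec z) = (M.mulVec v) ⬝ᵥ z := by
  rw [Matrix.mulVec_transpose, dotProduct_comm (M.mulVec v) z,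
    Matrix.dotProduct_mulVec, dotProduct_comm]

lemma abs_dotProduct_le {n : ℕ} (v w : Fin n → ℝ) :
    |v ⬝ᵥ w| ≤ (n : ℝ) * ‖v‖ * ‖w‖ := by
  calc |v ⬝ᵥ w| ≤ ∑ i, |v i * w i| := Finset.abs_sum_le_sum_abs _ _
    _ ≤ ∑ _i : Fin n, ‖v‖ * ‖w‖ := by
        refine Finset.sum_le_sum (fun i _ => ?_)
        rw [abs_mul]
        have h1 : |v i| ≤ ‖v‖ := norm_le_pi_norm v i
        have h2 : |w i| ≤ ‖w‖ := norm_le_pi_norm w i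
        exact mul_le_mul h1 h2 (abs_nonneg _) (norm_nonneg _)
    _ = (n : ℝ) * ‖v‖ * ‖w‖ := by
        rw [Finset.sum_const, Finset.card_univ, Fintype.card_fin, nsmul_eq_mul, mul_assoc]


section DirB

variable {N n p : ℕ}

lemma chain_pairing (A : Matrix (Fin n) (Fin n) ℝ) (C : Matrix (Fin p) (Fin n) ℝ)
    (σ : ℕ → Bool) (u : ℕ → Fin p → ℝ) (x₀ : Fin n → ℝ) (η : ℕ → Fin n → ℝ) :
    ∀ T : ℕ, (∀ s, s < T → A.mulVec (η (s + 1)) = η s) →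
      (∀ s, s < T → σ s = true → C.mulVec (η (s + 1)) = 0) →
      η T ⬝ᵥ traj Aᵀ Cᵀ σ u x₀ T = η 0 ⬝ᵥ x₀ := by
  intro T
  induction T with
  | zero => intro _ _; rfl
  | succ T ih =>
    intro hchain hC
    have hT : traj Aᵀ Cᵀ σ u x₀ (T + 1) =
        Aᵀ.mulVec (traj Aᵀ Cᵀ σ u x₀ T) + if σ T then Cᵀ.mulVec (u T) else 0 := rfl
    rw [hT, dotProduct_add, _root_.dotProduct_transpose_mulVec, hchain T (by omega),
      ih (fun s hs => hchain s (by omega)) (fun s hs => hC s (by omega))]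
    have hz : η (T + 1) ⬝ᵥ (if σ T then Cᵀ.mulVec (u T) else 0) = 0 := by
      by_cases h : σ T = true
      · rw [if_pos h, _root_.dotProduct_transpose_mulVec, hC T (by omega) h, zero_dotProduct]
      · rw [if_neg h, dotProduct_zero]
    rw [hz, add_zero]

lemma stab_imp_det (A : Matrix (Fin n) (Fin n) ℝ) (C : Matrix (Fin p) (Fin n) ℝ)
    (𝒜 : Automaton N) (hstab : Stabilizable Aᵀ Cᵀ 𝒜.rev) : Detectable A C 𝒜 := by
  classical
  intro σ hσ x₀ hzero
  by_contra hnot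
  obtain ⟨v, hv⟩ := hσ
  set c : ℕ → ℝ := fun t => ‖(A ^ t).mulVec x₀‖ with hcdef
  have hne : ∀ t, (A ^ t).mulVec x₀ ≠ 0 := by
    intro T hT0
    apply hnot
    have hzero' : ∀ t, T ≤ t → (A ^ t).mulVec x₀ = (0 : Fin n → ℝ) := by
      intro t ht
      have h1 : A ^ t = A ^ (t - T) * A ^ T := by
        rw [← pow_add]; congr 1; omega
      rw [h1, ← Matrix.mulVec_mulVec, hT0, Matrix.mulVec_zero]
    have heq : (fun t => (A ^ t).mulVec x₀) =ᶠ[atTop] (fun _ => (0 : Fin n → ℝ)) :=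
      eventually_atTop.mpr ⟨T, hzero'⟩
    exact Tendsto.congr' heq.symm tendsto_const_nhds
  have hcpos : ∀ t, 0 < c t := fun t => norm_pos_iff.mpr (hne t)
  have hrecord : ∃ Bd : ℝ, 0 < Bd ∧ ∀ L, ∃ T, L ≤ T ∧ ∀ j, j ≤ T → c j ≤ Bd * c T := by
    by_cases hb : ∃ M, ∀ t, c t ≤ M
    · obtain ⟨M, hM⟩ := hb
      have hM0 : 0 < M := lt_of_lt_of_le (hcpos 0) (hM 0)
      have h1 := mt Metric.tendsto_atTop.mpr hnot
      push_neg at h1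
      obtain ⟨ε, hε, h2⟩ := h1
      refine ⟨M / ε, by positivity, fun L => ?_⟩
      obtain ⟨T, hT1, hT2⟩ := h2 L
      rw [dist_eq_norm, sub_zero] at hT2
      refine ⟨T, hT1, fun j _ => ?_⟩
      calc c j ≤ M := hM j
        _ = (M / ε) * ε := by field_simp
        _ ≤ (M / ε) * c T := by
            have : 0 ≤ M / ε := by positivity
            exact mul_le_mul_of_nonneg_left hT2 this
    · push_neg at hb
      refine ⟨1, one_pos, fun L => ?_⟩
      obtain ⟨tstar, htstar⟩ := hb ((Finset.range (L + 1)).sup' (by simp) c)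
      obtain ⟨T, hTmem, hTmax⟩ := Finset.exists_max_image (Finset.range (tstar + 1)) c (by simp)
      have hTt : T ≤ tstar := by
        have := Finset.mem_range.mp hTmem; omega
      have hLT : L ≤ T := by
        by_contra hLt
        push_neg at hLt
        have h1 : c T ≤ (Finset.range (L + 1)).sup' (by simp) c :=
          Finset.le_sup' c (Finset.mem_range.mpr (by omega))
        have h2 : c tstar ≤ c T := hTmax tstar (Finset.mem_range.mpr (by omega))
        linarith
      refine ⟨T, hLT, fun j hj => ?_⟩
      rw [one_mul]
      exact hTmax j (Finset.mem_range.mpr (by omega))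
  obtain ⟨Bd, hBd, hrec⟩ := hrecord
  set Bad : ℕ → (ℕ → Fin N) → Prop := fun T w =>
    (∀ s, s + 1 < T → 𝒜.M (w (s + 1)) (w s) = true) ∧
    ∃ η : ℕ → (Fin n → ℝ),
      (∀ s, s < T → A.mulVec (η (s + 1)) = η s) ∧
      (∀ s, s < T → 𝒜.s (w s) = true → C.mulVec (η (s + 1)) = 0) ∧
      (∀ s, s ≤ T → ‖η s‖ ≤ Bd) ∧ ‖η 0‖ = 1 with hBadDef
  have hmono : ∀ T' T w, T' ≤ T → Bad T w → Bad T' w := by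
    rintro T' T w hle ⟨he, η, h1, h2, h3, h4⟩
    exact ⟨fun s hs => he s (by omega), η, fun s hs => h1 s (by omega),
      fun s hs => h2 s (by omega), fun s hs => h3 s (by omega), h4⟩
  have hext : ∀ T w w', (∀ s, s < T → w s = w' s) → Bad T w → Bad T w' := by
    rintro T w w' hag ⟨he, η, h1, h2, h3, h4⟩
    refine ⟨fun s hs => ?_, η, h1, fun s hs => ?_, h3, h4⟩
    · rw [← hag (s + 1) (by omega), ← hag s (by omega)]; exact he s hs
    · rw [← hag s (by omega)]; exact h2 s hs
  have hlong : ∀ L, ∃ w, Bad L w := by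
    intro L
    obtain ⟨T, hLT, hTrec⟩ := hrec L
    refine ⟨fun s => v (T - 1 - s), fun s hs => ?_, fun s => (c T)⁻¹ • (A ^ (T - s)).mulVec x₀,
      fun s hs => ?_, fun s hs hlab => ?_, fun s hs => ?_, ?_⟩
    · show 𝒜.M (v (T - 1 - (s + 1))) (v (T - 1 - s)) = true
      have h1 : T - 1 - (s + 1) = T - 2 - s := by omega
      have h2 : T - 1 - s = (T - 2 - s) + 1 := by omega
      rw [h1, h2]
      exact (hv (T - 2 - s)).1
    · show A.mulVec ((c T)⁻¹ • (A ^ (T - (s + 1))).mulVec x₀)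
        = (c T)⁻¹ • (A ^ (T - s)).mulVec x₀
      rw [Matrix.mulVec_smul]
      congr 1
      have h2 : T - s = (T - (s + 1)) + 1 := by omega
      rw [Matrix.mulVec_mulVec, h2, pow_succ']
    · show C.mulVec ((c T)⁻¹ • (A ^ (T - (s + 1))).mulVec x₀) = 0
      replace hlab : 𝒜.s (v (T - 1 - s)) = true := hlab
      have hσs : σ (T - 1 - s) = true := by
        rw [(hv (T - 1 - s)).2]; exact hlab
      have hz := hzero (T - 1 - s) hσs
      rw [Matrix.mulVec_smul]
      have h1 : T - (s + 1) = T - 1 - s := by omega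
      rw [h1, Matrix.mulVec_mulVec, hz, smul_zero]
    · show ‖(c T)⁻¹ • (A ^ (T - s)).mulVec x₀‖ ≤ Bd
      rw [norm_smul, norm_inv, norm_norm]
      have h := hTrec (T - s) (by omega)
      calc (c T)⁻¹ * ‖(A ^ (T - s)).mulVec x₀‖ ≤ (c T)⁻¹ * (Bd * c T) := by
            exact mul_le_mul_of_nonneg_left h (by positivity)
        _ = Bd := by field_simp [(hcpos T).ne']
    · show ‖(c T)⁻¹ • (A ^ (T - 0)).mulVec x₀‖ = 1
      rw [Nat.sub_zero, norm_smul, norm_inv, norm_norm]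
      exact inv_mul_cancel₀ (hcpos T).ne'
  obtain ⟨vinf, hvinf⟩ := koenig Bad hmono hext hlong
  set σ' : ℕ → Bool := fun t => 𝒜.s (vinf t) with hσ'def
  have hσ' : (𝒜.rev).Admissible σ' := by
    refine ⟨vinf, fun t => ⟨?_, rfl⟩⟩
    show 𝒜.Mᵀ (vinf t) (vinf (t + 1)) = true
    rw [Matrix.transpose_apply]
    exact (hvinf (t + 2)).1 t (by omega)
  set ηfam : ℕ → ℕ → (Fin n → ℝ) := fun T => Classical.choose ((hvinf T).2) with hηdef
  have hηfam : ∀ T, (∀ s, s < T → A.mulVec (ηfam T (s + 1)) = ηfam T s) ∧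
      (∀ s, s < T → 𝒜.s (vinf s) = true → C.mulVec (ηfam T (s + 1)) = 0) ∧
      (∀ s, s ≤ T → ‖ηfam T s‖ ≤ Bd) ∧ ‖ηfam T 0‖ = 1 :=
    fun T => Classical.choose_spec ((hvinf T).2)
  have hpick : ∀ T, ∃ i : Fin n, (1 : ℝ) / 2 ≤ |ηfam T 0 i| := by
    intro T
    by_contra h
    push_neg at h
    have h1 : ‖ηfam T 0‖ ≤ 1 / 2 := by
      refine (pi_norm_le_iff_of_nonneg (by norm_num)).mpr (fun i => ?_)
      exact (h i).le
    rw [(hηfam T).2.2.2] at h1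
    linarith
  choose iT hiT using hpick
  have hn : 0 < n := (iT 0).pos
  have hfiber : ∃ i : Fin n, ∀ L, ∃ T, L ≤ T ∧ iT T = i := by
    by_contra h
    push_neg at h
    choose Lf hLf using h
    exact hLf (iT ((Finset.univ : Finset (Fin n)).sup Lf)) _
      (Finset.le_sup (Finset.mem_univ _)) rfl
  obtain ⟨i, hi⟩ := hfiber
  obtain ⟨u, hu⟩ := hstab σ' hσ' (Pi.single i 1)
  have hnR : (0 : ℝ) < n := by exact_mod_cast hn
  have hε₀ : (0 : ℝ) < 1 / (2 * n * Bd) := by positivity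
  obtain ⟨T₁, hT₁⟩ := Metric.tendsto_atTop.mp hu (1 / (2 * n * Bd)) hε₀
  obtain ⟨T, hTge, hTi⟩ := hi T₁
  have hpair := chain_pairing A C σ' u (Pi.single i 1) (ηfam T) T (hηfam T).1
    (fun s hs hσs => (hηfam T).2.1 s hs hσs)
  have h1 : ηfam T 0 ⬝ᵥ Pi.single i (1 : ℝ) = ηfam T 0 i := by
    rw [dotProduct_single, mul_one]
  have h2 := hT₁ T hTge
  rw [dist_eq_norm, sub_zero] at h2
  have h3 : |ηfam T 0 i| ≤ (n : ℝ) * Bd * ‖traj Aᵀ Cᵀ σ' u (Pi.single i 1) T‖ := by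
    rw [← h1, ← hpair]
    calc |ηfam T T ⬝ᵥ traj Aᵀ Cᵀ σ' u (Pi.single i 1) T|
        ≤ (n : ℝ) * ‖ηfam T T‖ * ‖traj Aᵀ Cᵀ σ' u (Pi.single i 1) T‖ :=
          abs_dotProduct_le _ _
      _ ≤ (n : ℝ) * Bd * ‖traj Aᵀ Cᵀ σ' u (Pi.single i 1) T‖ := by
          have hb := (hηfam T).2.2.1 T le_rfl
          gcongr
  have h4 := hiT T
  rw [hTi] at h4
  have h5 : (n : ℝ) * Bd * ‖traj Aᵀ Cᵀ σ' u (Pi.single i 1) T‖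
      < (n : ℝ) * Bd * (1 / (2 * n * Bd)) := by
    have hpos : (0 : ℝ) < (n : ℝ) * Bd := by positivity
    exact mul_lt_mul_of_pos_left h2 hpos
  have h6 : (n : ℝ) * Bd * (1 / (2 * n * Bd)) = 1 / 2 := by
    field_simp
  linarith

end DirB


section DirA

variable {N n p : ℕ}

lemma dual_span_sup_eq_top {n : ℕ} {ι : Type*} [Fintype ι] (S : Submodule ℝ (Fin n → ℝ))
    (g : ι → Fin n → ℝ)
    (h : ∀ y : Fin n → ℝ, (∀ i, g i ⬝ᵥ y = 0) → (∀ z ∈ S, z ⬝ᵥ y = 0) → y = 0) :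
    Submodule.span ℝ (Set.range g) ⊔ S = ⊤ := by
  classical
  by_contra hne
  obtain ⟨f, hf0, hker⟩ := Submodule.exists_dual_map_eq_bot_of_lt_top
    (lt_top_iff_ne_top.mpr hne) inferInstance
  set y : Fin n → ℝ := fun i => f (Pi.single i 1) with hy
  have hrep : ∀ x : Fin n → ℝ, f x = x ⬝ᵥ y := by
    intro x
    have hx : x = ∑ i, x i • (Pi.single i 1 : Fin n → ℝ) := by
      funext j
      rw [Finset.sum_apply]
      simp [Pi.single_apply, mul_ite]
    conv_lhs => rw [hx]
    rw [map_sum]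
    simp only [LinearMap.map_smul, smul_eq_mul]
    rfl
  have hzero : ∀ v ∈ Submodule.span ℝ (Set.range g) ⊔ S, f v = 0 := by
    intro v hv
    have hmem : f v ∈ Submodule.map f (Submodule.span ℝ (Set.range g) ⊔ S) := ⟨v, hv, rfl⟩
    rw [hker] at hmem
    simpa using hmem
  have hy0 : y = 0 := by
    apply h
    · intro i
      have := hzero (g i) (Submodule.mem_sup_left (Submodule.subset_span (Set.mem_range_self i)))
      rwa [hrep] at this
    · intro z hz
      have := hzero z (Submodule.mem_sup_right hz)
      rwa [hrep] at this
  refine hf0 (LinearMap.ext fun x => ?_)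
  rw [hrep, hy0]
  simp

lemma traj_closed {n m : ℕ} (A' : Matrix (Fin n) (Fin n) ℝ) (B : Matrix (Fin n) (Fin m) ℝ)
    (σ : ℕ → Bool) (u : ℕ → Fin m → ℝ) (x₀ : Fin n → ℝ) (T : ℕ) :
    traj A' B σ u x₀ T = (A' ^ T).mulVec x₀ +
      ∑ t ∈ Finset.range T, (if σ t then (A' ^ (T - 1 - t)).mulVec (B.mulVec (u t)) else 0) := by
  induction T with
  | zero => simp [traj, Matrix.one_mulVec]
  | succ T ih =>
    show A'.mulVec (traj A' B σ u x₀ T) + (if σ T then B.mulVec (u T) else 0) = _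
    rw [ih, Matrix.mulVec_add, Matrix.mulVec_mulVec, ← pow_succ']
    have hsum : A'.mulVec (∑ t ∈ Finset.range T,
          (if σ t then (A' ^ (T - 1 - t)).mulVec (B.mulVec (u t)) else 0))
        = ∑ t ∈ Finset.range T,
          (if σ t then (A' ^ (T + 1 - 1 - t)).mulVec (B.mulVec (u t)) else 0) := by
      rw [← Matrix.mulVecLin_apply, map_sum]
      refine Finset.sum_congr rfl (fun t ht => ?_)
      rw [Matrix.mulVecLin_apply]
      by_cases h : σ t = true
      · rw [if_pos h, if_pos h, Matrix.mulVec_mulVec]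
        have he : T + 1 - 1 - t = (T - 1 - t) + 1 := by
          have := Finset.mem_range.mp ht; omega
        rw [he, pow_succ']
      · rw [if_neg h, if_neg h, Matrix.mulVec_zero]
    rw [hsum, Finset.sum_range_succ]
    have hlast : (if σ T then (A' ^ (T + 1 - 1 - T)).mulVec (B.mulVec (u T)) else 0)
        = (if σ T then B.mulVec (u T) else 0) := by
      by_cases h : σ T = true
      · rw [if_pos h, if_pos h]
        have : T + 1 - 1 - T = 0 := by omega
        rw [this, pow_zero, Matrix.one_mulVec]
      · rw [if_neg h, if_neg h]
    rw [hlast]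
    abel

lemma det_imp_stab (A : Matrix (Fin n) (Fin n) ℝ) (C : Matrix (Fin p) (Fin n) ℝ)
    (𝒜 : Automaton N) (hdet : Detectable A C 𝒜) : Stabilizable Aᵀ Cᵀ 𝒜.rev := by
  classical
  have hPi : ∃ T₀ : ℕ, ∀ (vw : ℕ → Fin N),
      (∀ s, s + 1 < T₀ → 𝒜.M (vw s) (vw (s + 1)) = true) →
      ∀ y : Fin n → ℝ, (∀ z ∈ stab Aᵀ, y ⬝ᵥ z = 0) →
      (∀ s, s < T₀ → 𝒜.s (vw s) = true → (C * A ^ s).mulVec y = 0) → y = 0 := by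
    by_contra hno
    push_neg at hno
    set Bad : ℕ → (ℕ → Fin N) → Prop := fun T vw =>
      (∀ s, s + 1 < T → 𝒜.M (vw s) (vw (s + 1)) = true) ∧
      ∃ y : Fin n → ℝ, (∀ z ∈ stab Aᵀ, y ⬝ᵥ z = 0) ∧
        ((∀ s, s < T → 𝒜.s (vw s) = true → (C * A ^ s).mulVec y = 0) ∧ y ≠ 0) with hBadDef
    have hmono : ∀ T' T w, T' ≤ T → Bad T w → Bad T' w := by
      rintro T' T w hle ⟨he, y, h1, h2, h3⟩
      exact ⟨fun s hs => he s (by omega), y, h1, fun s hs => h2 s (by omega), h3⟩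
    have hext : ∀ T w w', (∀ s, s < T → w s = w' s) → Bad T w → Bad T w' := by
      rintro T w w' hag ⟨he, y, h1, h2, h3⟩
      refine ⟨fun s hs => ?_, y, h1, fun s hs => ?_, h3⟩
      · rw [← hag (s + 1) (by omega), ← hag s (by omega)]; exact he s hs
      · rw [← hag s (by omega)]; exact h2 s hs
    have hlong : ∀ L, ∃ w, Bad L w := by
      intro L
      obtain ⟨vw, h1, y, h2, h3, h4⟩ := hno L
      exact ⟨vw, h1, y, h2, h3, h4⟩
    obtain ⟨vinf, hvinf⟩ := koenig Bad hmono hext hlong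
    have hσadm : 𝒜.Admissible (fun t => 𝒜.s (vinf t)) :=
      ⟨vinf, fun t => ⟨(hvinf (t + 2)).1 t (by omega), rfl⟩⟩
    let W : ℕ → Submodule ℝ (Fin n → ℝ) := fun T =>
      { carrier := {y | (∀ z ∈ stab Aᵀ, y ⬝ᵥ z = 0) ∧
          ∀ s, s < T → 𝒜.s (vinf s) = true → (C * A ^ s).mulVec y = 0}
        add_mem' := by
          rintro a b ⟨ha1, ha2⟩ ⟨hb1, hb2⟩
          refine ⟨fun z hz => ?_, fun s hs hl => ?_⟩
          · rw [add_dotProduct, ha1 z hz, hb1 z hz, add_zero]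
          · rw [Matrix.mulVec_add, ha2 s hs hl, hb2 s hs hl, add_zero]
        zero_mem' :=
          ⟨fun z _ => zero_dotProduct z, fun s _ _ => Matrix.mulVec_zero _⟩
        smul_mem' := by
          rintro r a ⟨h1, h2⟩
          refine ⟨fun z hz => ?_, fun s hs hl => ?_⟩
          · rw [smul_dotProduct, h1 z hz, smul_zero]
          · rw [Matrix.mulVec_smul, h2 s hs hl, smul_zero] }
    have hWmem : ∀ T y, y ∈ W T ↔ ((∀ z ∈ stab Aᵀ, y ⬝ᵥ z = 0) ∧
        ∀ s, s < T → 𝒜.s (vinf s) = true → (C * A ^ s).mulVec y = 0) := fun T y => Iff.rfl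
    have hWne : ∀ T, ∃ y, y ∈ W T ∧ y ≠ 0 := by
      intro T
      obtain ⟨-, y, h1, h2, h3⟩ := hvinf T
      exact ⟨y, ⟨h1, h2⟩, h3⟩
    have hWanti : ∀ T T', T ≤ T' → W T' ≤ W T := by
      intro T T' hTT' y hy
      exact ⟨hy.1, fun s hs hl => hy.2 s (by omega) hl⟩
    have hdne : ∃ d, ∃ T, Module.finrank ℝ (W T) = d := ⟨_, 0, rfl⟩
    obtain ⟨Tstar, hTstar⟩ := Nat.sInf_mem hdne
    obtain ⟨ystar, hymem, hyne⟩ := hWne Tstar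
    have hall : ∀ T, ystar ∈ W T := by
      intro T
      rcases le_total T Tstar with h | h
      · exact hWanti T Tstar h hymem
      · have heq : W T = W Tstar := by
          refine Submodule.eq_of_le_of_finrank_le (hWanti Tstar T h) ?_
          rw [hTstar]
          exact Nat.sInf_le ⟨T, rfl⟩
        rw [heq]
        exact hymem
    have houts : ∀ t, (fun t => 𝒜.s (vinf t)) t = true → (C * A ^ t).mulVec ystar = 0 :=
      fun t ht => (hall (t + 1)).2 t (by omega) ht
    have hst : ystar ∈ stab A := hdet _ hσadm ystar houts
    exact hyne (stab_dual_orth_inter A ystar hst (hall 0).1)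
  obtain ⟨T₀, hT₀⟩ := hPi
  intro σ' hσ' x₀
  obtain ⟨vt, hvt⟩ := hσ'
  set g : Fin T₀ × Fin p → (Fin n → ℝ) := fun tj =>
    if σ' (tj.1 : ℕ) = true then (Aᵀ ^ (T₀ - 1 - (tj.1 : ℕ)) * Cᵀ).mulVec (Pi.single tj.2 1)
    else 0 with hgdef
  have htop : Submodule.span ℝ (Set.range g) ⊔ stab Aᵀ = ⊤ := by
    apply dual_span_sup_eq_top
    intro y hgy hSy
    refine hT₀ (fun s => vt (T₀ - 1 - s)) ?_ y
      (fun z hz => by rw [dotProduct_comm]; exact hSy z hz) ?_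
    · intro s hs
      show 𝒜.M (vt (T₀ - 1 - s)) (vt (T₀ - 1 - (s + 1))) = true
      have h1 := (hvt (T₀ - 1 - (s + 1))).1
      have h2 : (𝒜.rev).M = 𝒜.Mᵀ := rfl
      rw [h2, Matrix.transpose_apply] at h1
      have h3 : T₀ - 1 - (s + 1) + 1 = T₀ - 1 - s := by omega
      rwa [h3] at h1
    · intro s hs hlab
      replace hlab : 𝒜.s (vt (T₀ - 1 - s)) = true := hlab
      have hσt : σ' (T₀ - 1 - s) = true := by
        rw [(hvt (T₀ - 1 - s)).2]; exact hlab
      have hts : T₀ - 1 - (T₀ - 1 - s) = s := by omega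
      funext j
      have := hgy (⟨T₀ - 1 - s, by omega⟩, j)
      rw [hgdef] at this
      simp only [hσt, if_true] at this
      rw [hts] at this
      have htr : (Aᵀ ^ s * Cᵀ) = (C * A ^ s)ᵀ := by
        rw [Matrix.transpose_mul, Matrix.transpose_pow]
      rw [htr] at this
      have hdot : y ⬝ᵥ ((C * A ^ s)ᵀ.mulVec (Pi.single j 1))
          = ((C * A ^ s).mulVec y) ⬝ᵥ Pi.single j 1 :=
        _root_.dotProduct_transpose_mulVec (C * A ^ s) y (Pi.single j 1)
      rw [dotProduct_comm] at this
      rw [hdot, dotProduct_single, mul_one] at this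
      exact this
  have hmem : (Aᵀ ^ T₀).mulVec x₀ ∈ Submodule.span ℝ (Set.range g) ⊔ stab Aᵀ := by
    rw [htop]; exact Submodule.mem_top
  obtain ⟨ρ, hρ, sv, hsv, hsum⟩ := Submodule.mem_sup.mp hmem
  obtain ⟨cf, hcf⟩ := (Submodule.mem_span_range_iff_exists_fun ℝ).mp hρ
  set u : ℕ → Fin p → ℝ := fun t j => if h : t < T₀ then -(cf (⟨t, h⟩, j)) else 0 with hudef
  refine ⟨u, ?_⟩
  have hT0traj : traj Aᵀ Cᵀ σ' u x₀ T₀ = sv := by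
    rw [traj_closed]
    have h1 : ∀ t : Fin T₀,
        (if σ' (t : ℕ) then (Aᵀ ^ (T₀ - 1 - (t : ℕ))).mulVec (Cᵀ.mulVec (u t)) else 0)
        = ∑ j : Fin p, (-(cf (t, j))) • g (t, j) := by
      intro t
      by_cases h : σ' (t : ℕ) = true
      · rw [if_pos h]
        have hut : (u (t : ℕ)) = fun j => -(cf (t, j)) := by
          funext j
          show (if h : (t : ℕ) < T₀ then -cf (⟨(t : ℕ), h⟩, j) else 0) = -cf (t, j)
          rw [dif_pos t.isLt]
        rw [hut]
        have hexp : Cᵀ.mulVec (fun j => -(cf (t, j)))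
            = ∑ j : Fin p, (-(cf (t, j))) • Cᵀ.mulVec (Pi.single j 1) := by
          have hv : (fun j => -(cf (t, j))) = ∑ j : Fin p, (-(cf (t, j))) • (Pi.single j 1 : Fin p → ℝ) := by
            funext i
            rw [Finset.sum_apply]
            simp [Pi.single_apply, mul_ite]
          rw [hv]
          simp only [← Matrix.mulVecLin_apply, map_sum, LinearMap.map_smul]
        rw [hexp]
        rw [← Matrix.mulVecLin_apply, map_sum]
        refine Finset.sum_congr rfl (fun j _ => ?_)
        rw [LinearMap.map_smul, Matrix.mulVecLin_apply, Matrix.mulVec_mulVec, hgdef]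
        simp only [h, if_true]
      · rw [if_neg h]
        symm
        refine Finset.sum_eq_zero (fun j _ => ?_)
        rw [hgdef]
        simp [h]
    have hsumu : ∑ t ∈ Finset.range T₀,
        (if σ' t then (Aᵀ ^ (T₀ - 1 - t)).mulVec (Cᵀ.mulVec (u t)) else 0) = -ρ := by
      rw [← Fin.sum_univ_eq_sum_range
        (fun t => if σ' t then (Aᵀ ^ (T₀ - 1 - t)).mulVec (Cᵀ.mulVec (u t)) else 0) T₀]
      have h2 : -ρ = ∑ i : Fin T₀ × Fin p, (-(cf i)) • g i := by
        rw [← hcf]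
        rw [← Finset.sum_neg_distrib]
        refine Finset.sum_congr rfl (fun i _ => ?_)
        rw [neg_smul]
      rw [h2, Fintype.sum_prod_type]
      exact Finset.sum_congr rfl (fun t _ => h1 t)
    rw [hsumu, ← hsum]
    abel
  have hcoast : ∀ k, traj Aᵀ Cᵀ σ' u x₀ (T₀ + k) = ((Aᵀ) ^ k).mulVec sv := by
    intro k
    induction k with
    | zero => rw [Nat.add_zero, hT0traj, pow_zero, Matrix.one_mulVec]
    | succ k ih =>
      show Aᵀ.mulVec (traj Aᵀ Cᵀ σ' u x₀ (T₀ + k)) +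
        (if σ' (T₀ + k) then Cᵀ.mulVec (u (T₀ + k)) else 0) = _
      have hu0 : u (T₀ + k) = 0 := by
        funext j
        show (if h : T₀ + k < T₀ then -cf (⟨T₀ + k, h⟩, j) else 0) = 0
        rw [dif_neg (by omega)]
      rw [hu0, Matrix.mulVec_zero, ite_self, add_zero, ih, Matrix.mulVec_mulVec, ← pow_succ']
  have h2 : Tendsto (fun k => traj Aᵀ Cᵀ σ' u x₀ (k + T₀)) atTop (nhds 0) := by
    have heq : (fun k => traj Aᵀ Cᵀ σ' u x₀ (k + T₀)) = fun k => ((Aᵀ) ^ k).mulVec sv := by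
      funext k
      rw [Nat.add_comm, hcoast k]
    rw [heq]
    exact hsv
  exact (tendsto_add_atTop_iff_nat T₀).mp h2

end DirA

/-- `(A,C,𝒜)` is detectable iff the dual system `(Aᵀ, Cᵀ, 𝒜ʳ)` is stabilizable. -/
theorem detectable_iff_dual_stabilizable {N n p : ℕ} (A : Matrix (Fin n) (Fin n) ℝ)
    (C : Matrix (Fin p) (Fin n) ℝ) (𝒜 : Automaton N) :
    Detectable A C 𝒜 ↔ Stabilizable A.transpose C.transpose 𝒜.rev :=
  ⟨fun h => det_imp_stab A C 𝒜 h, fun h => stab_imp_det A C 𝒜 h⟩
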